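/- Let (G, V^∞, T, k) be an instance of OddMultiwayNodeCut where G is a directed acyclic graph and T ⊆ V^∞ ⊆ V(G). Let M* be an odd multiway cut of minimum size that, among all minimum-size odd multiway cuts S, maximizes |r_G(S) ∪ f_G(S) ∪ S|, and among those, maximizes |r_G(S)|. Then M* is thin, and for every node v ∈ r_G(M*) there is an important v→T separator contained in M*. -/

import Mathlib

/-- A (simple) directed path in the directed graph `G`, represented as a nonempty
list of pairwise distinct vertices in which every consecutive pair is an edge of `G`. -/
def IsPath {V : Type*} (G : V → V → Prop) (p : List V) : Prop :=
  p ≠ [] ∧ p.Chain' G ∧ p.Nodup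

/-- `p` is a directed path from `u` to `v` in `G`. -/
def IsPathFrom {V : Type*} (G : V → V → Prop) (u v : V) (p : List V) : Prop :=
  IsPath G p ∧ p.head? = some u ∧ p.getLast? = some v

/-- The length (number of edges) of a path, given as its list of vertices. -/
def pathLen {V : Type*} (p : List V) : ℕ := p.length - 1

/-- The list of directed edges traversed by a path. -/
def edgesOf {V : Type*} (p : List V) : List (V × V) := p.zip p.tail

/-- A directed graph is acyclic (a DAG) if no vertex lies on a directed cycle. -/
def Acyclic {V : Type*} (G : V → V → Prop) : Prop :=
  ∀ v, ¬ Relation.TransGen G v v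

/-- The graph obtained from `G` by deleting the vertex set `M`. -/
def delV {V : Type*} (G : V → V → Prop) (M : Set V) : V → V → Prop :=
  fun a b => G a b ∧ a ∉ M ∧ b ∉ M

/-- An odd multiway (node) cut for the instance `(G, Vinf, T)`: a set of
non-protected vertices meeting every odd `T`-path of `G`. -/
def OddMWC {V : Type*} (G : V → V → Prop) (Vinf T M : Set V) : Prop :=
  M ⊆ Vinfᶜ ∧
  ∀ u ∈ T, ∀ v ∈ T, ∀ p, IsPathFrom G u v p → Odd (pathLen p) → ∃ z ∈ p, z ∈ M

/-- The forward shadow of `M`: vertices `v ∉ M` such that every path from a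
terminal to `v` in `G` intersects `M`. -/
def fShadow {V : Type*} (G : V → V → Prop) (T M : Set V) : Set V :=
  {v | v ∉ M ∧ ∀ t ∈ T, ∀ p, IsPathFrom G t v p → ∃ z ∈ p, z ∈ M}

/-- The reverse shadow of `M`: vertices `v ∉ M` such that every path from `v`
to a terminal in `G` intersects `M`. -/
def rShadow {V : Type*} (G : V → V → Prop) (T M : Set V) : Set V :=
  {v | v ∉ M ∧ ∀ t ∈ T, ∀ p, IsPathFrom G v t p → ∃ z ∈ p, z ∈ M}

/-- `S` is an `X → Y` separator: a set of non-protected vertices whose deletion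
destroys all paths from `X` to `Y`. -/
def IsSep {V : Type*} (G : V → V → Prop) (Vinf X Y S : Set V) : Prop :=
  Disjoint S Vinf ∧ ∀ x ∈ X, ∀ y ∈ Y, ¬ ∃ p, IsPathFrom (delV G S) x y p

/-- The set of vertices reachable from `X` in `G`. -/
def Reach {V : Type*} (G : V → V → Prop) (X : Set V) : Set V :=
  {v | ∃ x ∈ X, ∃ p, IsPathFrom G x v p}

/-- The `X → Y` separator `S'` dominates the `X → Y` separator `S`. -/
def Dominates {V : Type*} (G : V → V → Prop) (Vinf X Y S' S : Set V) : Prop :=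
  IsSep G Vinf X Y S' ∧ S'.ncard ≤ S.ncard ∧
    Reach (delV G S) X ⊂ Reach (delV G S') X

/-- An important `X → Y` separator: a minimal `X → Y` separator that is not
dominated by any other `X → Y` separator. -/
def ImportantSep {V : Type*} (G : V → V → Prop) (Vinf X Y S : Set V) : Prop :=
  IsSep G Vinf X Y S ∧ (∀ S', S' ⊂ S → ¬ IsSep G Vinf X Y S') ∧
  ∀ S', IsSep G Vinf X Y S' → S' ≠ S → ¬ Dominates G Vinf X Y S' S

section helpers
variable {V : Type*} {R G : V → V → Prop} {W : Set V}

lemma path_refl (R : V → V → Prop) (a : V) : IsPathFrom R a a [a] :=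
  ⟨⟨by simp, List.isChain_singleton _, by simp⟩, rfl, rfl⟩

lemma path_singleton {a b c : V} (h : IsPathFrom R a b [c]) : a = c ∧ b = c := by
  obtain ⟨-, h1, h2⟩ := h
  constructor
  · simpa using h1.symm
  · simpa using h2.symm

lemma chain'_delV : ∀ {l : List V}, l.Chain' G → (∀ z ∈ l, z ∉ W) →
    l.Chain' (delV G W)
  | [], _, _ => List.isChain_nil
  | [_], _, _ => List.isChain_singleton _
  | a :: b :: t, h, hW => by
    simp only [List.Chain', List.isChain_cons_cons] at h ⊢
    exact ⟨⟨h.1, hW a (by simp), hW b (by simp)⟩,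
      chain'_delV h.2 fun z hz => hW z (List.mem_cons_of_mem _ hz)⟩

lemma delV_not_mem : ∀ {l : List V}, l.Chain' (delV G W) → 2 ≤ l.length →
    ∀ z ∈ l, z ∉ W
  | [a, b], h, _, z, hz => by
    simp only [List.Chain', List.isChain_cons_cons] at h
    rcases (by simpa using hz : z = a ∨ z = b) with rfl | rfl
    · exact h.1.2.1
    · exact h.1.2.2
  | a :: b :: c :: t, h, _, z, hz => by
    simp only [List.Chain'] at h; rw [List.isChain_cons_cons] at h
    rcases List.mem_cons.mp hz with rfl | hz'
    · exact h.1.2.1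
    · exact delV_not_mem h.2 (by simp) z hz'

lemma chain'_rtg : ∀ {l : List V} {a b : V}, l.Chain' R → l.head? = some a →
    l.getLast? = some b → Relation.ReflTransGen R a b
  | [c], a, b, _, h1, h2 => by
    obtain rfl : c = a := by simpa using h1
    obtain rfl : c = b := by simpa using h2
    exact .refl
  | c :: d :: t, a, b, h, h1, h2 => by
    obtain rfl : c = a := by simpa using h1
    simp only [List.Chain', List.isChain_cons_cons] at h
    refine Relation.ReflTransGen.head h.1 (chain'_rtg h.2 rfl ?_)
    rwa [List.getLast?_cons_cons] at h2

lemma rtg_mem_head : ∀ {l : List V} {a : V}, l.Chain' R → l.head? = some a →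
    ∀ y ∈ l, Relation.ReflTransGen R a y
  | [c], a, _, h1, y, hy => by
    obtain rfl : c = a := by simpa using h1
    obtain rfl : y = c := by simpa using hy
    exact .refl
  | c :: d :: t, a, h, h1, y, hy => by
    obtain rfl : c = a := by simpa using h1
    simp only [List.Chain', List.isChain_cons_cons] at h
    rcases List.mem_cons.mp hy with rfl | hy'
    · exact .refl
    · exact Relation.ReflTransGen.head h.1 (rtg_mem_head h.2 rfl y hy')

lemma rtg_path {a b : V} (h : Relation.ReflTransGen R a b) :
    ∃ p, IsPathFrom R a b p := by
  induction h with
  | refl => exact ⟨[a], path_refl R a⟩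
  | @tail c b hac hcb ih =>
    obtain ⟨p, ⟨⟨hne, hch, hnd⟩, hh, hl⟩⟩ := ih
    by_cases hb : b ∈ p
    · obtain ⟨p₁, p₂, rfl⟩ := List.append_of_mem hb
      refine ⟨p₁ ++ [b], ⟨⟨by simp, ?_, ?_⟩, ?_, by simp⟩⟩
      · exact hch.prefix ⟨p₂, by simp⟩
      · exact ((p₁ ++ [b]).sublist_append_left p₂).nodup (by simpa using hnd)
      · rw [← hh]; cases p₁ <;> simp
    · refine ⟨p ++ [b], ⟨⟨by simp, ?_, ?_⟩, ?_, by simp⟩⟩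
      · simp only [List.Chain', List.isChain_append]
        refine ⟨hch, List.isChain_singleton _, ?_⟩
        intro x hx y hy
        obtain rfl : x = c := by rw [hl] at hx; exact (by simpa using hx : c = x).symm
        obtain rfl : y = b := by exact (by simpa using hy : b = y).symm
        exact hcb
      · simp [List.nodup_append, hnd, hb]
        intro a ha h; exact hb (h ▸ ha)
      · rw [List.head?_append_of_ne_nil _ hne, hh]

lemma path_suffix {a b z : V} {p₁ p₂ : List V}
    (h : IsPathFrom R a b (p₁ ++ z :: p₂)) : IsPathFrom R z b (z :: p₂) := by
  obtain ⟨⟨hne, hch, hnd⟩, hh, hl⟩ := h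
  refine ⟨⟨by simp, hch.suffix ⟨p₁, rfl⟩, ?_⟩, rfl, ?_⟩
  · exact (List.sublist_append_right p₁ (z :: p₂)).nodup hnd
  · rwa [List.getLast?_append_cons] at hl

end helpers

/-- **Corollary (shadow-maximal optimal solutions are thin and covered by
important separators).**
Let `(G, Vinf, T, k)` be an instance of OddMultiwayNodeCut with `G` a DAG and
`T ⊆ Vinf`.  Let `M` be a minimum-size odd multiway cut that, among all
minimum-size odd multiway cuts `S`, maximizes `|r_G(S) ∪ f_G(S) ∪ S|`, and
among those maximizes `|r_G(S)|`.  Then `M` is thin, and for every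
`v ∈ r_G(M)` some important `v → T` separator is contained in `M`. -/
theorem shadow_maximal_solution_thin_important {V : Type*} [Fintype V]
    (G : V → V → Prop) (hG : Acyclic G) (Vinf T : Set V) (hT : T ⊆ Vinf) (k : ℕ)
    (M : Set V) (hM : OddMWC G Vinf T M)
    (hmin : ∀ S, OddMWC G Vinf T S → M.ncard ≤ S.ncard)
    (hmax1 : ∀ S, OddMWC G Vinf T S → S.ncard = M.ncard →
      (rShadow G T S ∪ fShadow G T S ∪ S).ncard ≤
        (rShadow G T M ∪ fShadow G T M ∪ M).ncard)
    (hmax2 : ∀ S, OddMWC G Vinf T S → S.ncard = M.ncard →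
      (rShadow G T S ∪ fShadow G T S ∪ S).ncard =
        (rShadow G T M ∪ fShadow G T M ∪ M).ncard →
      (rShadow G T S).ncard ≤ (rShadow G T M).ncard) :
    (∀ x ∈ M, x ∉ rShadow G T (M \ {x})) ∧
    (∀ x ∈ rShadow G T M, ∃ S, S ⊆ M ∧ ImportantSep G Vinf {x} T S) := by
  
  classical
  have thin : ∀ x ∈ M, x ∉ rShadow G T (M \ {x}) := by
    intro x hxM hx
    obtain ⟨-, hall⟩ := hx
    have hcut : OddMWC G Vinf T (M \ {x}) := by
      refine ⟨fun z hz => hM.1 hz.1, ?_⟩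
      intro u hu v hv p hp hodd
      obtain ⟨z, hzp, hzM⟩ := hM.2 u hu v hv p hp hodd
      by_cases hzx : z = x
      · subst hzx
        obtain ⟨p₁, p₂, rfl⟩ := List.append_of_mem hzp
        obtain ⟨z', hz'p, hz'M⟩ := hall v hv _ (path_suffix hp)
        exact ⟨z', List.mem_append_right _ hz'p, hz'M⟩
      · exact ⟨z, hzp, hzM, hzx⟩
    have h1 := hmin _ hcut
    have h2 : (M \ {x}).ncard < M.ncard := Set.ncard_diff_singleton_lt_of_mem hxM
    omega
  refine ⟨thin, ?_⟩
  intro x hx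
  obtain ⟨hxM, hxall⟩ := hx
  have hxT : x ∉ T := by
    intro hxT
    obtain ⟨z, hz, hzM⟩ := hxall x hxT [x] (path_refl G x)
    obtain rfl : z = x := by simpa using hz
    exact hxM hzM
  have sep_of : ∀ W : Set V, (∀ t ∈ T, ∀ p, IsPathFrom G x t p → ∃ z ∈ p, z ∈ W) →
      Disjoint W Vinf → IsSep G Vinf {x} T W := by
    intro W hW hdis
    refine ⟨hdis, ?_⟩
    rintro x' hx' y hy ⟨q, hq⟩
    obtain rfl : x = x' := (Set.mem_singleton_iff.mp hx').symm
    rcases q with _ | ⟨c, _ | ⟨d, q''⟩⟩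
    · exact hq.1.1 rfl
    · obtain ⟨h1, h2⟩ := path_singleton hq
      exact hxT ((h1.trans h2.symm) ▸ hy)
    · have hW2 := delV_not_mem hq.1.2.1 (by simp)
      have hpG : IsPathFrom G x y (c :: d :: q'') :=
        ⟨⟨hq.1.1, hq.1.2.1.imp fun _ _ h => h.1, hq.1.2.2⟩, hq.2.1, hq.2.2⟩
      obtain ⟨z, hz, hzW⟩ := hW y hy _ hpG
      exact hW2 z hz hzW
  have hMsep : IsSep G Vinf {x} T M :=
    sep_of M hxall (Set.subset_compl_iff_disjoint_right.mp hM.1)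
  have hNN : (setOf fun n => ∃ S : Set V, (S ⊆ M ∧ IsSep G Vinf {x} T S) ∧ S.ncard = n).Nonempty :=
    ⟨M.ncard, M, ⟨subset_rfl, hMsep⟩, rfl⟩
  obtain ⟨S, hSF, hScard⟩ := Nat.sInf_mem hNN
  have hSmin : ∀ S' : Set V, S' ⊆ M → IsSep G Vinf {x} T S' → S.ncard ≤ S'.ncard := by
    intro S' h1 h2
    rw [hScard]
    exact Nat.sInf_le ⟨S', ⟨h1, h2⟩, rfl⟩
  obtain ⟨hS_sub, hSsep⟩ := hSF
  have hmin_sep : ∀ S', S' ⊂ S → ¬ IsSep G Vinf {x} T S' := by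
    intro S' hlt hsep
    exact absurd (hSmin S' (hlt.subset.trans hS_sub) hsep)
      (not_le.mpr (Set.ncard_lt_ncard hlt))
  refine ⟨S, hS_sub, hSsep, hmin_sep, ?_⟩
  intro S' hS'sep hne hdom
  obtain ⟨-, hcard, hreach⟩ := hdom
  have mem_reach : ∀ (W : Set V) (y : V),
      y ∈ Reach (delV G W) {x} ↔ Relation.ReflTransGen (delV G W) x y := by
    intro W y
    constructor
    · rintro ⟨x', hx', p, hp⟩
      obtain rfl : x = x' := (Set.mem_singleton_iff.mp hx').symm
      exact chain'_rtg hp.1.2.1 hp.2.1 hp.2.2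
    · intro h
      obtain ⟨p, hp⟩ := rtg_path h
      exact ⟨x, rfl, p, hp⟩
  have hxS' : x ∉ S' := by
    intro hxS'
    have hsub : Reach (delV G S') {x} ⊆ {x} := by
      rintro v ⟨x', hx', p, hp⟩
      obtain rfl : x = x' := (Set.mem_singleton_iff.mp hx').symm
      rcases p with _ | ⟨c, _ | ⟨d, t⟩⟩
      · exact absurd rfl hp.1.1
      · obtain ⟨h1, h2⟩ := path_singleton hp
        exact (h2.trans h1.symm : v = x)
      · exfalso
        have hc : c = x := by simpa using hp.2.1
        exact delV_not_mem hp.1.2.1 (by simp) c (by simp) (hc ▸ hxS')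
    have hxR : x ∈ Reach (delV G S) {x} := ⟨x, rfl, [x], path_refl _ x⟩
    exact hreach.not_subset (hsub.trans (Set.singleton_subset_iff.mpr hxR))
  have hRsub : ∀ y, Relation.ReflTransGen (delV G S) x y →
      Relation.ReflTransGen (delV G S') x y :=
    fun y h => (mem_reach S' y).mp (hreach.subset ((mem_reach S y).mpr h))
  have hnotS' : ∀ y, Relation.ReflTransGen (delV G S') x y → y ∉ S' := by
    intro y h
    induction h with
    | refl => exact hxS'
    | tail _ h2 _ => exact h2.2.2
  have hkey : ∀ s ∈ S \ S', Relation.ReflTransGen (delV G S') x s := by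
    rintro s ⟨hsS, hsS'⟩
    have hnotsep : ¬ IsSep G Vinf {x} T (S \ {s}) :=
      hmin_sep _ (Set.sdiff_singleton_ssubset.mpr hsS)
    have hq' : ∃ t ∈ T, ∃ q, IsPathFrom (delV G (S \ {s})) x t q := by
      by_contra hno
      push_neg at hno
      refine hnotsep ⟨hSsep.1.mono_left Set.diff_subset, ?_⟩
      rintro x' hx' y hy ⟨q, hq⟩
      obtain rfl : x = x' := (Set.mem_singleton_iff.mp hx').symm
      exact hno y hy q hq
    obtain ⟨t, ht, q, hq⟩ := hq'
    rcases q with _ | ⟨c, _ | ⟨d, q₀⟩⟩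
    · exact absurd rfl hq.1.1
    · obtain ⟨h1, h2⟩ := path_singleton hq
      exact absurd ((h1.trans h2.symm) ▸ ht) hxT
    · have hqW : ∀ z ∈ c :: d :: q₀, z ∉ S \ {s} := delV_not_mem hq.1.2.1 (by simp)
      have hqG : (c :: d :: q₀).Chain' G := hq.1.2.1.imp fun _ _ h => h.1
      have hqnd := hq.1.2.2
      have hsq : s ∈ c :: d :: q₀ := by
        by_contra hsq
        refine hSsep.2 x rfl t ht ⟨c :: d :: q₀, ⟨⟨hq.1.1, chain'_delV hqG ?_, hqnd⟩, hq.2.1, hq.2.2⟩⟩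
        intro z hz hzS
        exact hqW z hz ⟨hzS, fun he => hsq (he ▸ hz)⟩
      obtain ⟨q₁', q₂', hqeq⟩ := List.append_of_mem hsq
      have hsq₁ : s ∉ q₁' := by
        rw [hqeq] at hqnd
        intro hs
        exact (List.nodup_append'.mp hqnd).2.2 hs List.mem_cons_self
      have hq₁S : ∀ z ∈ q₁', z ∉ S := by
        intro z hz hzS
        exact hqW z (hqeq ▸ List.mem_append_left _ hz) ⟨hzS, fun he => hsq₁ (he ▸ hz)⟩
      have hqh : (q₁' ++ s :: q₂').head? = some x := by rw [← hqeq]; exact hq.2.1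
      have hq₁S' : ∀ y ∈ q₁', y ∉ S' := by
        intro y hy
        have hch : q₁'.Chain' G := by rw [hqeq] at hqG; exact hqG.prefix ⟨s :: q₂', rfl⟩
        have hh : q₁'.head? = some x := by
          rcases q₁' with _ | ⟨e, r⟩
          · simp at hy
          · simpa using hqh
        exact hnotS' y (hRsub y (rtg_mem_head (chain'_delV hch hq₁S) hh y hy))
      have hrch : (q₁' ++ [s]).Chain' G := by
        rw [hqeq] at hqG
        exact hqG.prefix ⟨q₂', by simp⟩
      have hrS' : ∀ z ∈ q₁' ++ [s], z ∉ S' := by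
        intro z hz
        rcases List.mem_append.mp hz with h | h
        · exact hq₁S' z h
        · obtain rfl : z = s := by simpa using h
          exact hsS'
      have hrh : (q₁' ++ [s]).head? = some x := by
        rcases q₁' with _ | ⟨e, r⟩
        · simpa using hqh
        · simpa using hqh
      exact chain'_rtg (chain'_delV hrch hrS') hrh (by simp)
  have hnopath : ∀ t ∈ T, ¬ Relation.ReflTransGen (delV G S') x t := by
    intro t ht h
    obtain ⟨p, hp⟩ := rtg_path h
    exact hS'sep.2 x rfl t ht ⟨p, hp⟩
  set M' := M \ S ∪ S' with hM'def
  have hS'M' : S' ⊆ M' := Set.subset_union_right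
  have escape : ∀ v t, t ∈ T → ∀ p, IsPathFrom G v t p → (∀ z ∈ p, z ∉ S') →
      Relation.ReflTransGen (delV G S') x v → False := by
    intro v t ht p hp havoid hxv
    exact hnopath t ht
      (hxv.trans (chain'_rtg (chain'_delV hp.1.2.1 havoid) hp.2.1 hp.2.2))
  have hM'V : M' ⊆ Vinfᶜ := by
    intro z hz
    rcases hz with ⟨hz, -⟩ | hz
    · exact hM.1 hz
    · exact (Set.subset_compl_iff_disjoint_right.mpr hS'sep.1) hz
  have memSdiff : ∀ z, z ∈ M → z ∉ M' → z ∈ S \ S' := by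
    intro z hzM hzM'
    refine ⟨?_, fun h => hzM' (Or.inr h)⟩
    by_contra h
    exact hzM' (Or.inl ⟨hzM, h⟩)
  have hM'cut : OddMWC G Vinf T M' := by
    refine ⟨hM'V, ?_⟩
    intro u hu v hv p hp hodd
    by_contra hno
    push_neg at hno
    obtain ⟨z, hzp, hzM⟩ := hM.2 u hu v hv p hp hodd
    have hzS := memSdiff z hzM (hno z hzp)
    obtain ⟨p₁, p₂, rfl⟩ := List.append_of_mem hzp
    exact escape z v hv _ (path_suffix hp)
      (fun w hw h => hno w (List.mem_append_right _ hw) (hS'M' h)) (hkey z hzS)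
  have hScardle : S.ncard ≤ M.ncard := Set.ncard_le_ncard hS_sub
  have hM'card : M'.ncard = M.ncard := by
    refine le_antisymm ?_ (hmin M' hM'cut)
    calc M'.ncard ≤ (M \ S).ncard + S'.ncard := Set.ncard_union_le _ _
      _ ≤ (M.ncard - S.ncard) + S.ncard := by
          rw [Set.ncard_diff hS_sub]
          omega
      _ = M.ncard := Nat.sub_add_cancel hScardle
  have claim1 : ∀ v, v ∈ rShadow G T M → v ∉ S' → v ∈ rShadow G T M' := by
    rintro v ⟨hvM, hvall⟩ hvS'
    refine ⟨fun h => h.elim (fun h => hvM h.1) hvS', ?_⟩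
    intro t ht p hp
    by_contra hno
    push_neg at hno
    obtain ⟨z, hzp, hzM⟩ := hvall t ht p hp
    have hzS := memSdiff z hzM (hno z hzp)
    obtain ⟨p₁, p₂, rfl⟩ := List.append_of_mem hzp
    exact escape z t ht _ (path_suffix hp)
      (fun w hw h => hno w (List.mem_append_right _ hw) (hS'M' h)) (hkey z hzS)
  have claim2 : ∀ s ∈ S \ S', s ∈ rShadow G T M' := by
    rintro s ⟨hsS, hsS'⟩
    refine ⟨fun h => h.elim (fun h => h.2 hsS) hsS', ?_⟩
    intro t ht p hp
    by_contra hno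
    push_neg at hno
    exact escape s t ht p hp (fun w hw h => hno w hw (hS'M' h)) (hkey s ⟨hsS, hsS'⟩)
  have claim3 : ∀ v, v ∈ fShadow G T M → v ∉ M' →
      v ∈ fShadow G T M' ∪ rShadow G T M' := by
    rintro v ⟨hvM, hvall⟩ hvM'
    by_cases hf : v ∈ fShadow G T M'
    · exact Or.inl hf
    · right
      rw [fShadow, Set.mem_setOf_eq] at hf
      push_neg at hf
      obtain ⟨t, ht, P, hP, hPa⟩ := hf hvM'
      obtain ⟨z, hzP, hzM⟩ := hvall t ht P hP
      have hzS := memSdiff z hzM (hPa z hzP)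
      refine ⟨hvM', ?_⟩
      intro t' ht' Q hQ
      by_contra hno
      push_neg at hno
      obtain ⟨P₁, P₂, rfl⟩ := List.append_of_mem hzP
      have hs := path_suffix hP
      have h1 : Relation.ReflTransGen (delV G S') z v :=
        chain'_rtg (chain'_delV hs.1.2.1
          (fun w hw h => hPa w (List.mem_append_right _ hw) (hS'M' h))) hs.2.1 hs.2.2
      have h2 : Relation.ReflTransGen (delV G S') v t' :=
        chain'_rtg (chain'_delV hQ.1.2.1 (fun w hw h => hno w hw (hS'M' h))) hQ.2.1 hQ.2.2
      exact hnopath t' ht' (((hkey z hzS).trans h1).trans h2)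
  have hU : rShadow G T M ∪ fShadow G T M ∪ M ⊆
      rShadow G T M' ∪ fShadow G T M' ∪ M' := by
    rintro v ((hv | hv) | hv)
    · by_cases hvS' : v ∈ S'
      · exact Or.inr (hS'M' hvS')
      · exact Or.inl (Or.inl (claim1 v hv hvS'))
    · by_cases hvM' : v ∈ M'
      · exact Or.inr hvM'
      · rcases claim3 v hv hvM' with h | h
        · exact Or.inl (Or.inr h)
        · exact Or.inl (Or.inl h)
    · by_cases hvM' : v ∈ M'
      · exact Or.inr hvM'
      · exact Or.inl (Or.inl (claim2 v (memSdiff v hv hvM')))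
  have hUeq : rShadow G T M ∪ fShadow G T M ∪ M =
      rShadow G T M' ∪ fShadow G T M' ∪ M' :=
    Set.eq_of_subset_of_ncard_le hU (hmax1 M' hM'cut hM'card)
  have hrle : (rShadow G T M').ncard ≤ (rShadow G T M).ncard :=
    hmax2 M' hM'cut hM'card (by rw [hUeq])
  have hsub2 : (rShadow G T M \ S') ∪ (S \ S') ⊆ rShadow G T M' := by
    rintro v (⟨hv, hvS'⟩ | hv)
    · exact claim1 v hv hvS'
    · exact claim2 v hv
  have hdisj2 : Disjoint (rShadow G T M \ S') (S \ S') := by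
    rw [Set.disjoint_left]
    rintro v ⟨hv, -⟩ ⟨hvS, -⟩
    exact hv.1 (hS_sub hvS)
  have hcount1 : (rShadow G T M \ S').ncard + (S \ S').ncard ≤ (rShadow G T M').ncard := by
    rw [← Set.ncard_union_eq hdisj2]
    exact Set.ncard_le_ncard hsub2
  have hsplit : (rShadow G T M ∩ S').ncard + (rShadow G T M \ S').ncard =
      (rShadow G T M).ncard := Set.ncard_inter_add_ncard_diff_eq_ncard _ _
  have hAsub : rShadow G T M ∩ S' ⊆ S' \ S := by
    rintro v ⟨h1, h2⟩
    exact ⟨h2, fun hS => h1.1 (hS_sub hS)⟩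
  have hAcard : (rShadow G T M ∩ S').ncard ≤ (S' \ S).ncard := Set.ncard_le_ncard hAsub
  have hdS' : (S' ∩ S).ncard + (S' \ S).ncard = S'.ncard :=
    Set.ncard_inter_add_ncard_diff_eq_ncard _ _
  have hdS : (S ∩ S').ncard + (S \ S').ncard = S.ncard :=
    Set.ncard_inter_add_ncard_diff_eq_ncard _ _
  have hinterc : (S' ∩ S).ncard = (S ∩ S').ncard := by rw [Set.inter_comm]
  have hAeq : rShadow G T M ∩ S' = S' \ S :=
    Set.eq_of_subset_of_ncard_le hAsub (by omega)
  have hSS'ne : (S \ S').Nonempty := by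
    rcases Set.eq_empty_or_nonempty (S \ S') with he | h
    · exfalso
      have hsub3 : S ⊆ S' := Set.diff_eq_empty.mp he
      exact hne (Set.eq_of_subset_of_ncard_le hsub3 hcard).symm
    · exact h
  obtain ⟨s₀, hs₀⟩ := hSS'ne
  have hthin := thin s₀ (hS_sub hs₀.1)
  rw [rShadow, Set.mem_setOf_eq] at hthin
  push_neg at hthin
  obtain ⟨t, ht, E, hE, hEa⟩ := hthin (by simp)
  by_cases hES' : ∀ z ∈ E, z ∉ S'
  · exact escape s₀ t ht E hE hES' (hkey s₀ hs₀)
  · push_neg at hES'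
    obtain ⟨w, hwE, hwS'⟩ := hES'
    have hws₀ : w ≠ s₀ := fun h => hs₀.2 (h ▸ hwS')
    have hwM : w ∉ M := fun h => hEa w hwE ⟨h, hws₀⟩
    have hwr : w ∈ rShadow G T M := by
      have hw2 : w ∈ S' \ S := ⟨hwS', fun h => hwM (hS_sub h)⟩
      rw [← hAeq] at hw2
      exact hw2.1
    obtain ⟨E₁, E₂, rfl⟩ := List.append_of_mem hwE
    obtain ⟨z, hzE, hzM⟩ := hwr.2 t ht _ (path_suffix hE)
    have hzs₀ : z = s₀ := by
      by_contra h
      exact hEa z (List.mem_append_right _ hzE) ⟨hzM, h⟩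
    have hzE' : s₀ ∈ w :: E₂ := hzs₀ ▸ hzE
    rcases E₁ with _ | ⟨e, E₁'⟩
    · exact hws₀ (by simpa using hE.2.1)
    · have he : e = s₀ := by simpa using hE.2.1
      have hnd := hE.1.2.2
      exact (List.nodup_append'.mp hnd).2.2 (by simp [he]) hzE'
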